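/- Let r_1 = (2α_1/π)^{1/4} and for t > 0 define f(t) = (π/24) r_1^6 (6t + 3/t − t^3) + α_2 r_1^2 t for t < 1 and f(t) = (π/3) r_1^6 + α_2 r_1^2 t for t ≥ 1. Then f is C^1 on (0,∞), strictly convex on (0,1), tends to +∞ as t → 0+, is strictly increasing on [1,∞), and admits a unique minimizer t_0 ∈ (0,1) given by t_0 = √(1 + α_2/α_1) − √(α_2/α_1). -/

import Mathlib

open Real Set Filter

open Topology

set_option maxHeartbeats 1000000 in
/-- The Thomas-Fermi energy as a function of `t = (r/r₁)²`: it is `C¹` on `(0,∞)`,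
strictly convex on `(0,1)`, tends to `+∞` as `t → 0⁺`, strictly increasing on `[1,∞)`,
and has the unique minimizer `t₀ = √(1+α₂/α₁) − √(α₂/α₁) ∈ (0,1)`. -/
theorem thomas_fermi_radius_optimization
    (α₁ α₂ : ℝ) (hα₁ : 0 < α₁) (hα₂ : 0 < α₂)
    (r₁ : ℝ) (hr₁ : r₁ = (2 * α₁ / π) ^ ((1 : ℝ) / 4))
    (f : ℝ → ℝ)
    (hf : ∀ t : ℝ, f t = if t < 1
      then π / 24 * r₁ ^ 6 * (6 * t + 3 / t - t ^ 3) + α₂ * r₁ ^ 2 * t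
      else π / 3 * r₁ ^ 6 + α₂ * r₁ ^ 2 * t)
    (t₀ : ℝ) (ht₀ : t₀ = Real.sqrt (1 + α₂ / α₁) - Real.sqrt (α₂ / α₁)) :
    ContDiffOn ℝ 1 f (Ioi 0) ∧
    StrictConvexOn ℝ (Ioo 0 1) f ∧
    Tendsto f (nhdsWithin 0 (Ioi 0)) atTop ∧
    StrictMonoOn f (Ici 1) ∧
    t₀ ∈ Ioo (0 : ℝ) 1 ∧
    (∀ t ∈ Ioi (0 : ℝ), t ≠ t₀ → f t₀ < f t) := by
  have hπ := Real.pi_pos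
  have hb : (0:ℝ) < 2 * α₁ / π := by positivity
  have hr0 : 0 < r₁ := hr₁ ▸ Real.rpow_pos_of_pos hb _
  have hr4 : π * r₁ ^ 4 = 2 * α₁ := by
    have h4 : r₁ ^ (4:ℕ) = 2 * α₁ / π := by
      rw [hr₁, ← Real.rpow_natCast _ 4, ← Real.rpow_mul hb.le]
      norm_num
    rw [h4]; field_simp
  have hK : π / 8 * r₁ ^ 6 = α₁ / 4 * r₁ ^ 2 := by
    have h : π / 8 * r₁ ^ 6 = (π * r₁ ^ 4) * r₁ ^ 2 / 8 := by ring
    rw [h, hr4]; ring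
  -- the left branch and the derivative function
  set φ : ℝ → ℝ := fun t => π / 24 * r₁ ^ 6 * (6 * t + 3 / t - t ^ 3) + α₂ * r₁ ^ 2 * t with hφ
  set g : ℝ → ℝ := fun t =>
    α₂ * r₁ ^ 2 - π / 8 * r₁ ^ 6 * (min 0 (t ^ 2 - 1)) ^ 2 / t ^ 2 with hg
  have hfle : ∀ t : ℝ, t ≤ 1 → f t = φ t := by
    intro t ht
    rcases eq_or_lt_of_le ht with h | h
    · rw [hf, if_neg (by simp [h]), hφ, h]; norm_num; ring
    · rw [hf, if_pos h]
  have hfge : ∀ t : ℝ, 1 ≤ t → f t = π / 3 * r₁ ^ 6 + α₂ * r₁ ^ 2 * t := by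
    intro t ht; rw [hf, if_neg (not_lt.2 ht)]
  -- derivative of the left branch
  have hφd : ∀ t : ℝ, t ≠ 0 →
      HasDerivAt φ (π / 24 * r₁ ^ 6 * (6 - 3 / t ^ 2 - 3 * t ^ 2) + α₂ * r₁ ^ 2) t := by
    intro t ht
    have h6 : HasDerivAt (fun t : ℝ => 6 * t) 6 t := by
      simpa using (hasDerivAt_id t).const_mul 6
    have h3 : HasDerivAt (fun t : ℝ => 3 / t) (-(3 / t ^ 2)) t := by
      have h := (hasDerivAt_inv ht).const_mul 3
      have e : (fun t : ℝ => 3 / t) = fun y => 3 * y⁻¹ := by funext y; ring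
      rw [e]; exact h.congr_deriv (by ring)
    have hp : HasDerivAt (fun t : ℝ => t ^ 3) (3 * t ^ 2) t := by
      simpa using hasDerivAt_pow 3 t
    have hA : HasDerivAt (fun t : ℝ => α₂ * r₁ ^ 2 * t) (α₂ * r₁ ^ 2) t := by
      simpa using (hasDerivAt_id t).const_mul (α₂ * r₁ ^ 2)
    have h := (((h6.add h3).sub hp).const_mul (π / 24 * r₁ ^ 6)).add hA
    exact h.congr_deriv (by ring)
  -- derivative of the right branch
  have hψd : ∀ t : ℝ, HasDerivAt (fun t : ℝ => π / 3 * r₁ ^ 6 + α₂ * r₁ ^ 2 * t)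
      (α₂ * r₁ ^ 2) t := by
    intro t
    have := ((hasDerivAt_id t).const_mul (α₂ * r₁ ^ 2)).const_add (π / 3 * r₁ ^ 6)
    simpa using this
  -- has derivative
  have hd : ∀ t ∈ Ioi (0:ℝ), HasDerivAt f (g t) t := by
    intro t ht
    simp only [mem_Ioi] at ht
    rcases lt_trichotomy t 1 with hlt | heq | hgt
    · have hev : f =ᶠ[𝓝 t] φ := by
        filter_upwards [Iio_mem_nhds hlt] with y hy
        exact hfle y hy.le
      have h := (hφd t ht.ne').congr_of_eventuallyEq hev
      refine h.congr_deriv ?_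
      have hm : min 0 (t ^ 2 - 1) = t ^ 2 - 1 := min_eq_right (by nlinarith)
      rw [hg]
      simp only [hm]
      field_simp
      ring
    · subst heq
      have hIic : HasDerivWithinAt f (α₂ * r₁ ^ 2) (Iic 1) 1 := by
        have h := ((hφd 1 one_ne_zero).hasDerivWithinAt (s := Iic 1)).congr
          (fun y hy => hfle y hy) (hfle 1 le_rfl)
        exact h.congr_deriv (by norm_num)
      have hIci : HasDerivWithinAt f (α₂ * r₁ ^ 2) (Ici 1) 1 :=
        ((hψd 1).hasDerivWithinAt (s := Ici 1)).congr
          (fun y hy => hfge y hy) (hfge 1 le_rfl)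
      have h := hIic.union hIci
      rw [Iic_union_Ici, hasDerivWithinAt_univ] at h
      refine h.congr_deriv ?_
      rw [hg]; norm_num
    · have hev : f =ᶠ[𝓝 t] fun t => π / 3 * r₁ ^ 6 + α₂ * r₁ ^ 2 * t := by
        filter_upwards [Ioi_mem_nhds hgt] with y hy
        exact hfge y hy.le
      have h := (hψd t).congr_of_eventuallyEq hev
      refine h.congr_deriv ?_
      have hm : min 0 (t ^ 2 - 1) = 0 := min_eq_left (by nlinarith)
      rw [hg]
      simp [hm]
  have hfd : ∀ t ∈ Ioi (0:ℝ), deriv f t = g t := fun t ht => (hd t ht).deriv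
  have hfc : ContinuousOn f (Ioi 0) := fun x hx =>
    ((hd x hx).continuousAt).continuousWithinAt
  -- continuity of g
  have hgc : ContinuousOn g (Ioi 0) := by
    rw [hg]
    apply ContinuousOn.sub continuousOn_const
    apply ContinuousOn.div
    · fun_prop
    · fun_prop
    · intro x hx
      exact pow_ne_zero 2 (ne_of_gt hx)
  -- Part 1 : C¹
  have hC1 : ContDiffOn ℝ 1 f (Ioi 0) := by
    have : ContDiffOn ℝ (0 + 1) f (Ioi 0) := by
      rw [contDiffOn_succ_iff_deriv_of_isOpen isOpen_Ioi]
      refine ⟨fun x hx => ((hd x hx).differentiableAt).differentiableWithinAt, by simp, ?_⟩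
      rw [contDiffOn_zero]
      exact hgc.congr hfd
    simpa using this
  -- Part 2 : strict convexity on (0,1)
  have hconv : StrictConvexOn ℝ (Ioo 0 1) f := by
    apply StrictMonoOn.strictConvexOn_of_deriv (convex_Ioo 0 1)
      (hfc.mono Ioo_subset_Ioi_self)
    rw [interior_Ioo]
    intro x hx y hy hxy
    rw [hfd x hx.1, hfd y hy.1, hg]
    simp only
    have h1x : 0 < 1 - x ^ 2 := by nlinarith [mul_pos hx.1 (sub_pos.2 hx.2)]
    have h1y : 0 < 1 - y ^ 2 := by nlinarith [mul_pos hy.1 (sub_pos.2 hy.2)]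
    have hmx : min 0 (x ^ 2 - 1) = x ^ 2 - 1 := min_eq_right (by linarith)
    have hmy : min 0 (y ^ 2 - 1) = y ^ 2 - 1 := min_eq_right (by linarith)
    rw [hmx, hmy, sub_lt_sub_iff_left,
      div_lt_div_iff₀ (pow_pos hy.1 2) (pow_pos hx.1 2)]
    have hKpos : 0 < π / 8 * r₁ ^ 6 := by positivity
    have hfac1 : 0 < (1 - x ^ 2) * y - (1 - y ^ 2) * x := by
      nlinarith [mul_pos (sub_pos.2 hxy) (mul_pos hx.1 hy.1)]
    have hfac2 : 0 < (1 - x ^ 2) * y + (1 - y ^ 2) * x := by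
      nlinarith [mul_pos h1x hy.1, mul_pos h1y hx.1]
    nlinarith [mul_pos hKpos (mul_pos hfac1 hfac2)]
  -- Part 3 : tendsto atTop
  have htend : Tendsto f (nhdsWithin 0 (Ioi 0)) atTop := by
    have hev : f =ᶠ[𝓝[>] (0:ℝ)] φ := by
      filter_upwards [Ioo_mem_nhdsGT (show (0:ℝ) < 1 by norm_num)] with y hy
      exact hfle y hy.2.le
    rw [tendsto_congr' hev]
    have h1 : Tendsto (fun t : ℝ => π / 24 * r₁ ^ 6 * 3 * t⁻¹) (𝓝[>] 0) atTop :=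
      tendsto_inv_nhdsGT_zero.const_mul_atTop (by positivity)
    have h2 : Tendsto (fun t : ℝ => π / 24 * r₁ ^ 6 * (6 * t - t ^ 3) + α₂ * r₁ ^ 2 * t)
        (𝓝[>] 0) (𝓝 (π / 24 * r₁ ^ 6 * (6 * 0 - 0 ^ 3) + α₂ * r₁ ^ 2 * 0)) := by
      apply Tendsto.mono_left _ nhdsWithin_le_nhds
      exact (Continuous.tendsto (by fun_prop) 0)
    have h := h1.atTop_add h2
    refine h.congr fun t => ?_
    rw [hφ]
    simp only
    field_simp
    ring
  -- Part 4 : strict mono on [1,∞)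
  have hmono : StrictMonoOn f (Ici 1) := by
    intro x hx y hy hxy
    rw [hfge x hx, hfge y hy]
    have := mul_lt_mul_of_pos_left hxy (show (0:ℝ) < α₂ * r₁ ^ 2 by positivity)
    linarith
  -- t₀ facts
  have ha : 0 < α₂ / α₁ := by positivity
  set sa := Real.sqrt (α₂ / α₁) with hsa
  set s1 := Real.sqrt (1 + α₂ / α₁) with hs1
  have hsa2 : sa ^ 2 = α₂ / α₁ := Real.sq_sqrt ha.le
  have hs12 : s1 ^ 2 = 1 + α₂ / α₁ := Real.sq_sqrt (by positivity)
  have hsa0 : 0 < sa := Real.sqrt_pos.2 ha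
  have hs10 : 0 < s1 := Real.sqrt_pos.2 (by positivity)
  have hlt : sa < s1 := by
    rw [hsa, hs1]
    exact Real.sqrt_lt_sqrt ha.le (by linarith)
  have ht₀pos : 0 < t₀ := by rw [ht₀]; linarith
  have ht₀lt1 : t₀ < 1 := by
    rw [ht₀]
    nlinarith [hs12, hsa2, hsa0, hs10]
  have ha2 : α₂ = α₁ * (α₂ / α₁) := by field_simp
  have hsa2' : α₁ * sa ^ 2 = α₂ := by rw [hsa2]; field_simp
  -- sign of g
  have hgpos : ∀ t, t₀ < t → 0 < g t := by
    intro t ht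
    have htpos : 0 < t := ht₀pos.trans ht
    rcases lt_or_ge t 1 with h1 | h1
    · have hm : min 0 (t ^ 2 - 1) = t ^ 2 - 1 := min_eq_right (by nlinarith)
      have ht2 : (0:ℝ) < t ^ 2 := pow_pos htpos 2
      rw [hg]
      simp only [hm]
      rw [sub_pos, div_lt_iff₀ ht2, hK]
      have hts : s1 < t + sa := by rw [ht₀] at ht; linarith
      have hsq : s1 ^ 2 < (t + sa) ^ 2 := by nlinarith
      have hlin : 1 - t ^ 2 < 2 * sa * t := by nlinarith
      have h0 : 0 ≤ 1 - t ^ 2 := by nlinarith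
      have hsq2 : (1 - t ^ 2) ^ 2 < (2 * sa * t) ^ 2 := by
        nlinarith [mul_pos (sub_pos.2 hlin) (show 0 < 2 * sa * t + (1 - t ^ 2) by positivity)]
      have heq : α₁ * (2 * sa * t) ^ 2 = 4 * α₂ * t ^ 2 := by
        have h : α₁ * (2 * sa * t) ^ 2 = 4 * (α₁ * sa ^ 2) * t ^ 2 := by ring
        rw [h, hsa2']
      have h2 : α₁ * (1 - t ^ 2) ^ 2 < 4 * α₂ * t ^ 2 := by
        have := mul_lt_mul_of_pos_left hsq2 hα₁
        linarith
      nlinarith [mul_lt_mul_of_pos_left h2 (show (0:ℝ) < r₁ ^ 2 / 4 by positivity)]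
    · have hm : min 0 (t ^ 2 - 1) = 0 := min_eq_left (by nlinarith)
      rw [hg]
      simp only [hm]
      have : (0:ℝ) ^ 2 = 0 := by norm_num
      rw [this, mul_zero, zero_div, sub_zero]
      positivity
  have hgneg : ∀ t ∈ Ioo 0 t₀, g t < 0 := by
    intro t ht
    obtain ⟨htpos, htlt⟩ := ht
    have htlt1 : t < 1 := htlt.trans ht₀lt1
    have hm : min 0 (t ^ 2 - 1) = t ^ 2 - 1 := min_eq_right (by nlinarith)
    have ht2 : (0:ℝ) < t ^ 2 := pow_pos htpos 2
    rw [hg]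
    simp only [hm]
    rw [sub_neg, lt_div_iff₀ ht2, hK]
    have hts : t + sa < s1 := by rw [ht₀] at htlt; linarith
    have hsq : (t + sa) ^ 2 < s1 ^ 2 := by nlinarith
    have hlin : 2 * sa * t < 1 - t ^ 2 := by nlinarith
    have hsq2 : (2 * sa * t) ^ 2 < (1 - t ^ 2) ^ 2 := by
      nlinarith [mul_pos (sub_pos.2 hlin)
        (show 0 < 1 - t ^ 2 + 2 * sa * t by nlinarith [mul_pos hsa0 htpos])]
    have heq : α₁ * (2 * sa * t) ^ 2 = 4 * α₂ * t ^ 2 := by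
      have h : α₁ * (2 * sa * t) ^ 2 = 4 * (α₁ * sa ^ 2) * t ^ 2 := by ring
      rw [h, hsa2']
    have h2 : 4 * α₂ * t ^ 2 < α₁ * (1 - t ^ 2) ^ 2 := by
      have := mul_lt_mul_of_pos_left hsq2 hα₁
      linarith
    nlinarith [mul_lt_mul_of_pos_left h2 (show (0:ℝ) < r₁ ^ 2 / 4 by positivity)]
  -- monotonicity pieces
  have hIcisub : Ici t₀ ⊆ Ioi (0:ℝ) := fun x hx => lt_of_lt_of_le ht₀pos hx
  have hmono2 : StrictMonoOn f (Ici t₀) := by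
    apply strictMonoOn_of_deriv_pos (convex_Ici t₀) (hfc.mono hIcisub)
    intro x hx
    rw [interior_Ici] at hx
    rw [hfd x (hIcisub (le_of_lt hx : t₀ ≤ x))]
    exact hgpos x hx
  have hanti : StrictAntiOn f (Ioc 0 t₀) := by
    apply strictAntiOn_of_deriv_neg (convex_Ioc 0 t₀) (hfc.mono fun x hx => hx.1)
    intro x hx
    rw [interior_Ioc] at hx
    rw [hfd x hx.1]
    exact hgneg x hx
  refine ⟨hC1, hconv, htend, hmono, ⟨ht₀pos, ht₀lt1⟩, ?_⟩
  intro t htp htne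
  simp only [mem_Ioi] at htp
  rcases lt_or_gt_of_ne htne with h | h
  · exact hanti ⟨htp, h.le⟩ ⟨ht₀pos, le_rfl⟩ h
  · exact hmono2 self_mem_Ici h.le h
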